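/- Krein dichotomy: Let J be the standard symplectic matrix and L a Hermitian matrix. If v is a complex eigenvector of JL with eigenvalue λ not lying on the imaginary axis (Re λ ≠ 0), then v† L v = 0. -/
import Mathlib


open Matrix

/-- Krein dichotomy: if JL v = λ v with L Hermitian, J the standard symplectic
    matrix, and Re λ ≠ 0, then v† L v = 0. -/
theorem stmt_1 (n : ℕ)
    (L : Matrix (Fin n ⊕ Fin n) (Fin n ⊕ Fin n) ℂ) (hL : L.IsHermitian)
    (J : Matrix (Fin n ⊕ Fin n) (Fin n ⊕ Fin n) ℂ)
    (hJ : J = Matrix.fromBlocks 0 (-1) 1 0)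
    (v : Fin n ⊕ Fin n → ℂ) (hv : v ≠ 0)
    (lam : ℂ) (hre : lam.re ≠ 0)
    (heig : (J * L).mulVec v = lam • v) :
    star v ⬝ᵥ L.mulVec v = 0 := by
  have hJ2 : J * J = -1 := by
    subst hJ
    simp [Matrix.fromBlocks_multiply, ← Matrix.fromBlocks_one, Matrix.fromBlocks_neg]
  have hJH : Jᴴ = -J := by
    subst hJ
    ext i j
    rcases i with i | i <;> rcases j with j | j <;>
      simp [Matrix.conjTranspose_apply, Matrix.fromBlocks, Matrix.one_apply, apply_ite,
        eq_comm]
  -- L v = -lam • J v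
  have hLv : L.mulVec v = -(lam • J.mulVec v) := by
    have := congrArg (J.mulVec) heig
    rw [Matrix.mulVec_mulVec, ← Matrix.mul_assoc, hJ2, neg_one_mul, Matrix.neg_mulVec,
      Matrix.mulVec_smul] at this
    linear_combination (norm := module) -this
  set a : ℂ := star v ⬝ᵥ J.mulVec v with ha
  have hb : star v ⬝ᵥ L.mulVec v = -(lam * a) := by
    rw [hLv]
    simp [ha, dotProduct_smul, dotProduct_neg, mul_comm]
  have hstara : star a = -a := by
    rw [ha, ← Matrix.star_dotProduct_star, star_star, Matrix.star_mulVec, hJH]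
    rw [dotProduct_comm, Matrix.dotProduct_mulVec]
    simp [Matrix.vecMul_neg, dotProduct_neg, ha, dotProduct_comm]
  have hbr : star (star v ⬝ᵥ L.mulVec v) = star v ⬝ᵥ L.mulVec v := by
    rw [← Matrix.star_dotProduct_star, star_star, Matrix.star_mulVec, hL.eq]
    rw [Matrix.dotProduct_mulVec]
  rw [hb, star_neg, star_mul', hstara] at hbr
  have key : (lam + star lam) * a = 0 := by linear_combination hbr
  have hlam : lam + star lam ≠ 0 := by
    simp [Complex.ext_iff, Complex.add_re, Complex.add_im]
    intro h
    exact absurd (by linarith [h] : lam.re = 0) hre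
  have haz : a = 0 := by
    rcases mul_eq_zero.mp key with h | h
    · exact absurd h hlam
    · exact h
  rw [hb, haz, mul_zero, neg_zero]
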